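/- Bouncing rod energy conservation at impact: let c = cos α and r, l > 0. The left-corner impact map Δ on ℝ⁴, fixing (y, α) and updating (ẏ, α̇) ↦ (ẏ, α̇) − (4/(l²c² + 4r²))·(2r²ẏ − l r² c α̇, (1/2)l²c²α̇ − l c ẏ), preserves the kinetic-plus-potential energy H(y, α, ẏ, α̇) = (1/2)m(ẏ² + r²α̇²) + m g y for any m, g > 0; that is, H(Δ(x)) = H(x) for all x = (y, α, ẏ, α̇) ∈ ℝ⁴ with l²cos²α + 4r² ≠ 0. -/
import Mathlib

/-- Bouncing-rod energy conservation at impact: the left-corner elastic impact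
map preserves the total energy `H = (1/2)m(ẏ² + r²α̇²) + mgy`. -/
theorem stmt14 (m g r l : ℝ) (hm : 0 < m) (hg : 0 < g) (hr : 0 < r) (hl : 0 < l)
    (y α dy da : ℝ) (hden : l ^ 2 * Real.cos α ^ 2 + 4 * r ^ 2 ≠ 0) :
    let c := Real.cos α
    let d := l ^ 2 * c ^ 2 + 4 * r ^ 2
    let dy' := dy - 4 * (2 * r ^ 2 * dy - l * r ^ 2 * c * da) / d
    let da' := da - 4 * ((1 / 2) * l ^ 2 * c ^ 2 * da - l * c * dy) / d
    (1 / 2) * m * (dy' ^ 2 + r ^ 2 * da' ^ 2) + m * g * y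
      = (1 / 2) * m * (dy ^ 2 + r ^ 2 * da ^ 2) + m * g * y := by
  intro c d dy' da'
  have hd : d ≠ 0 := hden
  simp only [dy', da', d, c] at *
  field_simp
  ring
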